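/- arXiv:1010.5577 — 4 statements merged into one kernel-verified Lean document; each statement's English description precedes it below -/
import Mathlib

section
/- Let ρ be a density operator on a finite-dimensional complex Hilbert space H, let M be a projective measurement on H, let 𝔼 = E_1,…,E_k be a sequence of events all of which are defined by the measurement M (i.e. each E_i = {M ∈ A_i} for some A_i ⊆ spec(M)), and let 𝔼′ be a permutation of the sequence 𝔼. Then Pr_ρ[𝔼] = Pr_ρ[𝔼′]. -/
open Matrix Finset
open scoped ComplexOrder

/-- A quantum measurement on `ℂ^d`: a finite family of operators indexed by the
outcomes in `spec`, satisfying the completeness condition `∑ Mₘ† Mₘ = I`. -/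
structure Measurement (d : ℕ) where
  spec : Finset ℕ
  op : ℕ → Matrix (Fin d) (Fin d) ℂ
  complete : ∑ m ∈ spec, (op m)ᴴ * op m = 1

/-- An event `{M ∈ A}`: a measurement together with a subset of its spectrum. -/
structure QEvent (d : ℕ) where
  meas : Measurement d
  A : Finset ℕ
  sub : A ⊆ meas.spec

/-- The super-operator defined by an event: `ρ ↦ ∑_{m ∈ A} Mₘ ρ Mₘ†`. -/
noncomputable def QEvent.superop {d : ℕ} (E : QEvent d) (ρ : Matrix (Fin d) (Fin d) ℂ) :
    Matrix (Fin d) (Fin d) ℂ :=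
  ∑ m ∈ E.A, E.meas.op m * ρ * (E.meas.op m)ᴴ

/-- The probability of a sequence of events in state `ρ`:
`Pr_ρ[E₁,…,E_k] = tr(𝓔_k(⋯𝓔₁(ρ)⋯))`. -/
noncomputable def PrSeq {d : ℕ} (ρ : Matrix (Fin d) (Fin d) ℂ) (Es : List (QEvent d)) : ℝ :=
  (Matrix.trace (Es.foldl (fun σ E => E.superop σ) ρ)).re

/-- A density operator: positive semidefinite with trace one. -/
def IsDensityOp {d : ℕ} (ρ : Matrix (Fin d) (Fin d) ℂ) : Prop :=
  ρ.PosSemidef ∧ ρ.trace = 1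

/-- A projective measurement: every operator is an orthogonal projection and
distinct operators are orthogonal. -/
def Measurement.IsProjective {d : ℕ} (M : Measurement d) : Prop :=
  (∀ m ∈ M.spec, (M.op m)ᴴ = M.op m ∧ M.op m * M.op m = M.op m) ∧
  ∀ m ∈ M.spec, ∀ m' ∈ M.spec, m ≠ m' → M.op m * M.op m' = 0

/-- The complete event `I_M = {M ∈ spec(M)}`. -/
def completeEvent {d : ℕ} (M : Measurement d) : QEvent d :=
  ⟨M, M.spec, subset_rfl⟩

/-- The complement `Ē = {M ∈ spec(M) \ A}` of the event `E = {M ∈ A}`. -/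
def QEvent.compl {d : ℕ} (E : QEvent d) : QEvent d :=
  ⟨E.meas, E.meas.spec \ E.A, Finset.sdiff_subset⟩

/-- Conditional probability `Pr_ρ[𝔽|𝔼] = Pr_ρ[𝔼,𝔽] / Pr_ρ[𝔼]`. -/
noncomputable def condPrSeq {d : ℕ} (ρ : Matrix (Fin d) (Fin d) ℂ) (Fs Es : List (QEvent d)) : ℝ :=
  PrSeq ρ (Es ++ Fs) / PrSeq ρ Es

lemma superop_superop_key {d : ℕ} {M : Measurement d} (hM : M.IsProjective)
    {A B : Finset ℕ} (hA : A ⊆ M.spec) (hB : B ⊆ M.spec)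
    (ρ : Matrix (Fin d) (Fin d) ℂ) :
    ∑ n ∈ B, M.op n * (∑ m ∈ A, M.op m * ρ * (M.op m)ᴴ) * (M.op n)ᴴ
      = ∑ m ∈ A ∩ B, M.op m * ρ * (M.op m)ᴴ := by
  have key : ∀ n ∈ B, ∀ m ∈ A,
      M.op n * (M.op m * ρ * (M.op m)ᴴ) * (M.op n)ᴴ
        = if m = n then M.op m * ρ * (M.op m)ᴴ else 0 := by
    intro n hn m hm
    have hnH := (hM.1 n (hB hn)).1
    have hmH := (hM.1 m (hA hm)).1
    by_cases h : m = n
    · subst h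
      have := (hM.1 m (hA hm)).2
      simp only [if_pos rfl, hnH, hmH]
      calc M.op m * (M.op m * ρ * M.op m) * M.op m
          = (M.op m * M.op m) * ρ * (M.op m * M.op m) := by
            noncomm_ring
        _ = M.op m * ρ * M.op m := by rw [this]
    · have h0 : M.op n * M.op m = 0 := hM.2 n (hB hn) m (hA hm) (Ne.symm h)
      have h0' : M.op m * M.op n = 0 := hM.2 m (hA hm) n (hB hn) h
      simp only [if_neg h, hnH, hmH]
      calc M.op n * (M.op m * ρ * M.op m) * M.op n
          = (M.op n * M.op m) * ρ * (M.op m * M.op n) := by noncomm_ring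
        _ = 0 := by rw [h0, h0']; simp
  calc ∑ n ∈ B, M.op n * (∑ m ∈ A, M.op m * ρ * (M.op m)ᴴ) * (M.op n)ᴴ
      = ∑ n ∈ B, ∑ m ∈ A, M.op n * (M.op m * ρ * (M.op m)ᴴ) * (M.op n)ᴴ := by
        refine Finset.sum_congr rfl fun n hn => ?_
        rw [Finset.mul_sum, Finset.sum_mul]
    _ = ∑ n ∈ B, ∑ m ∈ A, if m = n then M.op m * ρ * (M.op m)ᴴ else 0 := by
        refine Finset.sum_congr rfl fun n hn => Finset.sum_congr rfl fun m hm => ?_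
        exact key n hn m hm
    _ = ∑ m ∈ A ∩ B, M.op m * ρ * (M.op m)ᴴ := by
        rw [Finset.sum_comm]
        simp [Finset.sum_ite_eq, Finset.sum_ite_mem]

lemma superop_comm {d : ℕ} {M : Measurement d} (hM : M.IsProjective)
    (E F : QEvent d) (hE : E.meas = M) (hF : F.meas = M)
    (ρ : Matrix (Fin d) (Fin d) ℂ) :
    F.superop (E.superop ρ) = E.superop (F.superop ρ) := by
  have hEA : E.A ⊆ M.spec := hE ▸ E.sub
  have hFA : F.A ⊆ M.spec := hF ▸ F.sub
  simp only [QEvent.superop, hE, hF]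
  rw [superop_superop_key hM hEA hFA, superop_superop_key hM hFA hEA,
    Finset.inter_comm]

/-- Proposition 1.1: if all events in the sequence `Es` are defined by
the same projective measurement `M`, and `Es'` is a permutation of `Es`, then
`Pr_ρ[Es] = Pr_ρ[Es']`. -/
theorem prSeq_perm_of_projective {d : ℕ} (ρ : Matrix (Fin d) (Fin d) ℂ)
    (hρ : IsDensityOp ρ) (M : Measurement d) (hM : M.IsProjective)
    (Es Es' : List (QEvent d)) (hmeas : ∀ E ∈ Es, E.meas = M)
    (hperm : Es.Perm Es') :
    PrSeq ρ Es = PrSeq ρ Es' := by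
  clear hρ
  induction hperm generalizing ρ with
  | nil => rfl
  | cons E h ih =>
      rename_i l₁ l₂
      simp only [PrSeq, List.foldl_cons] at *
      exact ih (E.superop ρ) fun F hF => hmeas F (List.mem_cons_of_mem E hF)
  | swap E F l =>
      simp only [PrSeq, List.foldl_cons]
      rw [superop_comm hM E F (hmeas E (by simp)) (hmeas F (by simp)) ρ]
  | trans p q ihp ihq =>
      exact (ihp ρ hmeas).trans (ihq ρ fun F hF => hmeas F (p.mem_iff.mpr hF))
end

section
/- Let Σ = (ρ; M_1,…,M_n) be a test on a finite-dimensional complex Hilbert space H, let E_1,…,E_n be events with E_i defined by M_i for each i, let K < L be subsequences of (n] with Pr_Σ[𝔼_K] ≠ 0, and let J be any subsequence of L. Then the full monotonicity of conditional probability in a test holds: Pr_Σ[𝔼_L | 𝔼_K] ≤ Pr_Σ[𝔼_J | 𝔼_K]. -/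
open Matrix Finset
open scoped ComplexOrder

/-- The list of events realizing `Pr_Σ[𝔼_K]` in the test `Σ = (ρ; M₁,…,M_n)`:
all measurements `M₁,…,M_{max K}` are performed; at the indices `i ∈ K` the event
`E i` is used, while at the remaining indices the complete event `I_{M_i}` is used. -/
noncomputable def testList {d : ℕ} (n : ℕ) (Ms : ℕ → Measurement d) (E : ℕ → QEvent d)
    (K : Finset ℕ) : List (QEvent d) :=
  ((List.range' 1 n).filter (fun i => decide (∃ k ∈ K, i ≤ k))).map
    (fun i => if i ∈ K then E i else completeEvent (Ms i))

/-- The probability `Pr_Σ[𝔼_K]` of the subsequence of events indexed by `K` in the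
test `Σ = (ρ; M₁,…,M_n)`. -/
noncomputable def PrTest {d : ℕ} (ρ : Matrix (Fin d) (Fin d) ℂ) (n : ℕ)
    (Ms : ℕ → Measurement d) (E : ℕ → QEvent d) (K : Finset ℕ) : ℝ :=
  PrSeq ρ (testList n Ms E K)

/-- The conditional probability `Pr_Σ[𝔼_L | 𝔼_K]` in a test (for `K < L`, the
concatenation `𝔼_K,𝔼_L` is the subsequence indexed by `K ∪ L`). -/
noncomputable def condPrTest {d : ℕ} (ρ : Matrix (Fin d) (Fin d) ℂ) (n : ℕ)
    (Ms : ℕ → Measurement d) (E : ℕ → QEvent d) (L K : Finset ℕ) : ℝ :=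
  PrTest ρ n Ms E (K ∪ L) / PrTest ρ n Ms E K

/-- Independence `Ind_Σ(E_i | 𝔼_J; 𝔼_{K∖J})`: `Pr_Σ[E_i|𝔼_K] = Pr_Σ[E_i|𝔼_{K∖J}]`. -/
def IndTest {d : ℕ} (ρ : Matrix (Fin d) (Fin d) ℂ) (n : ℕ)
    (Ms : ℕ → Measurement d) (E : ℕ → QEvent d) (i : ℕ) (J K : Finset ℕ) : Prop :=
  condPrTest ρ n Ms E {i} K = condPrTest ρ n Ms E {i} (K \ J)

/-- Negative independence `NInd_Σ(E_i | 𝔼_K)`: `Pr_Σ[E_i | Ē_K] = Pr_Σ[E_i]`,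
where in the conditioning sequence every event of `𝔼_K` is replaced by its complement. -/
def NIndTest {d : ℕ} (ρ : Matrix (Fin d) (Fin d) ℂ) (n : ℕ)
    (Ms : ℕ → Measurement d) (E : ℕ → QEvent d) (i : ℕ) (K : Finset ℕ) : Prop :=
  condPrTest ρ n Ms (Function.update (fun k => (E k).compl) i (E i)) {i} K
    = PrTest ρ n Ms E {i}

/-- `NInd_{Σ,𝔼}(k|l)`: `NInd_Σ(E_k | E₁,…,E_j)` for all `1 ≤ j ≤ l`. -/
def NIndSeq {d : ℕ} (ρ : Matrix (Fin d) (Fin d) ℂ) (n : ℕ)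
    (Ms : ℕ → Measurement d) (E : ℕ → QEvent d) (k l : ℕ) : Prop :=
  ∀ j, 1 ≤ j → j ≤ l → NIndTest ρ n Ms E k (Finset.Icc 1 j)

lemma trace_re_nonneg {d : ℕ} {M : Matrix (Fin d) (Fin d) ℂ} (h : M.PosSemidef) :
    0 ≤ M.trace.re := by
  have h1 : ∀ i, 0 ≤ (M i i).re := by
    intro i
    have := h.re_dotProduct_nonneg (Pi.single i 1)
    simpa [dotProduct, mulVec, Pi.single_apply, Finset.sum_ite_eq] using this
  simp only [Matrix.trace, Matrix.diag, Complex.re_sum]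
  exact Finset.sum_nonneg fun i _ => h1 i

lemma trace_re_mono {d : ℕ} {σ τ : Matrix (Fin d) (Fin d) ℂ} (h : (τ - σ).PosSemidef) :
    σ.trace.re ≤ τ.trace.re := by
  have := trace_re_nonneg h
  rw [Matrix.trace_sub, Complex.sub_re] at this
  linarith

lemma psd_sum {d : ℕ} {s : Finset ℕ} {f : ℕ → Matrix (Fin d) (Fin d) ℂ}
    (h : ∀ m ∈ s, (f m).PosSemidef) : (∑ m ∈ s, f m).PosSemidef := by
  classical
  refine Finset.sum_induction f _ (fun a b ha hb => ha.add hb) Matrix.PosSemidef.zero h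

lemma superop_psd {d : ℕ} (F : QEvent d) {ρ : Matrix (Fin d) (Fin d) ℂ} (h : ρ.PosSemidef) :
    (F.superop ρ).PosSemidef :=
  psd_sum fun m _ => h.mul_mul_conjTranspose_same _

lemma superop_sub {d : ℕ} (F : QEvent d) (τ σ : Matrix (Fin d) (Fin d) ℂ) :
    F.superop (τ - σ) = F.superop τ - F.superop σ := by
  simp [QEvent.superop, Matrix.mul_sub, Matrix.sub_mul, Finset.sum_sub_distrib]

lemma trace_spec_sum {d : ℕ} (F : QEvent d) (ρ : Matrix (Fin d) (Fin d) ℂ) :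
    ρ.trace = ∑ m ∈ F.meas.spec, (F.meas.op m * ρ * (F.meas.op m)ᴴ).trace := by
  calc ρ.trace = ((∑ m ∈ F.meas.spec, (F.meas.op m)ᴴ * F.meas.op m) * ρ).trace := by
        rw [F.meas.complete, one_mul]
    _ = ∑ m ∈ F.meas.spec, ((F.meas.op m)ᴴ * F.meas.op m * ρ).trace := by
        rw [Finset.sum_mul, trace_sum]
    _ = _ := by
        refine Finset.sum_congr rfl fun m _ => ?_
        rw [Matrix.trace_mul_cycle, Matrix.trace_mul_cycle]

lemma trace_superop_le {d : ℕ} (F : QEvent d) {ρ : Matrix (Fin d) (Fin d) ℂ}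
    (h : ρ.PosSemidef) : (F.superop ρ).trace.re ≤ ρ.trace.re := by
  rw [trace_spec_sum F ρ, ← Finset.sum_sdiff F.sub]
  have : (F.superop ρ).trace = ∑ m ∈ F.A, (F.meas.op m * ρ * (F.meas.op m)ᴴ).trace := by
    rw [QEvent.superop, trace_sum]
  rw [this]
  simp only [Complex.add_re, Complex.re_sum]
  exact le_add_of_nonneg_left
    (Finset.sum_nonneg fun m _ => trace_re_nonneg (h.mul_mul_conjTranspose_same _))

lemma PrSeq_cons {d : ℕ} (ρ : Matrix (Fin d) (Fin d) ℂ) (F : QEvent d) (Es : List (QEvent d)) :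
    PrSeq ρ (F :: Es) = PrSeq (F.superop ρ) Es := rfl

lemma PrSeq_le_trace {d : ℕ} (Es : List (QEvent d)) :
    ∀ ρ : Matrix (Fin d) (Fin d) ℂ, ρ.PosSemidef → PrSeq ρ Es ≤ ρ.trace.re := by
  induction Es with
  | nil => exact fun ρ _ => le_refl _
  | cons F Es ih =>
    intro ρ h
    exact le_trans (ih _ (superop_psd F h)) (trace_superop_le F h)

lemma psd_fold {d : ℕ} (Es : List (QEvent d)) :
    ∀ ρ : Matrix (Fin d) (Fin d) ℂ, ρ.PosSemidef →
      (Es.foldl (fun σ F => F.superop σ) ρ).PosSemidef := by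
  induction Es with
  | nil => exact fun ρ h => h
  | cons F Es ih => exact fun ρ h => ih _ (superop_psd F h)

lemma PrSeq_nonneg {d : ℕ} {ρ : Matrix (Fin d) (Fin d) ℂ} (h : ρ.PosSemidef)
    (Es : List (QEvent d)) : 0 ≤ PrSeq ρ Es :=
  trace_re_nonneg (psd_fold Es ρ h)

lemma step_psd {d : ℕ} {F G : QEvent d} (hm : F.meas = G.meas) (hA : F.A ⊆ G.A)
    {σ τ : Matrix (Fin d) (Fin d) ℂ} (hσ : σ.PosSemidef) (hτσ : (τ - σ).PosSemidef) :
    (G.superop τ - F.superop σ).PosSemidef := by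
  have h1 : G.superop τ - F.superop σ
      = G.superop (τ - σ) + ∑ m ∈ G.A \ F.A, G.meas.op m * σ * (G.meas.op m)ᴴ := by
    rw [superop_sub]
    have h2 : F.superop σ = ∑ m ∈ F.A, G.meas.op m * σ * (G.meas.op m)ᴴ := by
      rw [QEvent.superop, hm]
    rw [h2]
    have h3 := Finset.sum_sdiff (f := fun m => G.meas.op m * σ * (G.meas.op m)ᴴ) hA
    have h4 : G.superop σ = ∑ m ∈ G.A, G.meas.op m * σ * (G.meas.op m)ᴴ := rfl
    rw [h4, ← h3]
    abel
  rw [h1]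
  exact (superop_psd G hτσ).add (psd_sum fun m _ => hσ.mul_mul_conjTranspose_same _)

lemma aux_mono {d : ℕ} (f g : ℕ → QEvent d) (P Q : ℕ → Bool)
    (hfg : ∀ x, Q x = true → (f x).meas = (g x).meas ∧ (f x).A ⊆ (g x).A) :
    ∀ (l : List ℕ) (σ τ : Matrix (Fin d) (Fin d) ℂ), σ.PosSemidef → (τ - σ).PosSemidef →
    List.Pairwise (fun x y => Q y = true → Q x = true) l →
    (∀ x ∈ l, Q x = true → P x = true) →
    PrSeq σ ((l.filter P).map f) ≤ PrSeq τ ((l.filter Q).map g) := by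
  intro l
  induction l with
  | nil => intro σ τ hσ hτσ _ _; exact trace_re_mono hτσ
  | cons a l ih =>
    intro σ τ hσ hτσ hpw hQP
    rcases List.pairwise_cons.mp hpw with ⟨hhead, hpw'⟩
    cases hQ : Q a with
    | true =>
      have hP : P a = true := hQP a (List.mem_cons_self (a := a) (l := l)) hQ
      rw [List.filter_cons_of_pos hP, List.filter_cons_of_pos hQ, List.map_cons, List.map_cons,
        PrSeq_cons, PrSeq_cons]
      obtain ⟨hm, hA⟩ := hfg a hQ
      exact ih _ _ (superop_psd _ hσ) (step_psd hm hA hσ hτσ) hpw'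
        (fun x hx hq => hQP x (List.mem_cons_of_mem a hx) hq)
    | false =>
      have hQl : ∀ x ∈ l, Q x = false := by
        intro x hx
        cases h : Q x with
        | false => rfl
        | true => exact absurd (hhead x hx h) (by simp [hQ])
      have hfilt : (a :: l).filter Q = [] := by
        rw [List.filter_cons_of_neg (by simp [hQ])]
        exact List.filter_eq_nil_iff.mpr (fun x hx => by simp [hQl x hx])
      rw [hfilt]
      calc PrSeq σ (((a :: l).filter P).map f) ≤ σ.trace.re :=
            PrSeq_le_trace _ σ hσ
        _ ≤ τ.trace.re := trace_re_mono hτσ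
        _ = PrSeq τ ([].map g) := rfl

theorem condPrTest_mono' {d : ℕ} (ρ : Matrix (Fin d) (Fin d) ℂ) (hρ : ρ.PosSemidef)
    (n : ℕ) (Ms : ℕ → Measurement d) (E : ℕ → QEvent d)
    (hE : ∀ k ∈ Finset.Icc 1 n, (E k).meas = Ms k)
    (K L J : Finset ℕ) (hL : L ⊆ Finset.Icc 1 n) (hJ : J ⊆ L) :
    PrSeq ρ (((List.range' 1 n).filter (fun i => decide (∃ k ∈ K ∪ L, i ≤ k))).map
      (fun i => if i ∈ K ∪ L then E i else completeEvent (Ms i)))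
    ≤ PrSeq ρ (((List.range' 1 n).filter (fun i => decide (∃ k ∈ K ∪ J, i ≤ k))).map
      (fun i => if i ∈ K ∪ J then E i else completeEvent (Ms i))) := by
  have hsub : K ∪ J ⊆ K ∪ L := Finset.union_subset_union_right hJ
  refine aux_mono _ _ _ _ ?_ _ ρ ρ hρ (by simpa using Matrix.PosSemidef.zero) ?_ ?_
  · intro x _
    by_cases hx : x ∈ K ∪ J
    · rw [if_pos hx, if_pos (hsub hx)]
      exact ⟨rfl, subset_rfl⟩
    · rw [if_neg hx]
      by_cases hx' : x ∈ K ∪ L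
      · rw [if_pos hx']
        have hxL : x ∈ L := by
          rcases Finset.mem_union.mp hx' with h | h
          · exact absurd (Finset.mem_union_left J h) hx
          · exact h
        have hm := hE x (hL hxL)
        refine ⟨hm, ?_⟩
        have := (E x).sub
        rw [hm] at this
        exact this
      · rw [if_neg hx']
        exact ⟨rfl, subset_rfl⟩
  · refine (List.pairwise_lt_range' (s := 1) (n := n)).imp ?_
    intro x y hxy hQ
    simp only [decide_eq_true_eq] at hQ ⊢
    obtain ⟨k, hk, hyk⟩ := hQ
    exact ⟨k, hk, le_of_lt (lt_of_lt_of_le hxy hyk)⟩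
  · intro x _ hQ
    simp only [decide_eq_true_eq] at hQ ⊢
    obtain ⟨k, hk, hxk⟩ := hQ
    exact ⟨k, hsub hk, hxk⟩


/-- Proposition 3.2, Monotonicity in a test: for subsequences `K < L`
of `(n]` and any subsequence `J` of `L`, `Pr_Σ[𝔼_L | 𝔼_K] ≤ Pr_Σ[𝔼_J | 𝔼_K]`. -/
theorem condPrTest_mono {d : ℕ} (ρ : Matrix (Fin d) (Fin d) ℂ) (hρ : IsDensityOp ρ)
    (n : ℕ) (Ms : ℕ → Measurement d) (E : ℕ → QEvent d)
    (hE : ∀ k ∈ Finset.Icc 1 n, (E k).meas = Ms k)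
    (K L J : Finset ℕ) (hK : K ⊆ Finset.Icc 1 n) (hL : L ⊆ Finset.Icc 1 n)
    (hKL : ∀ k ∈ K, ∀ l ∈ L, k < l) (hJ : J ⊆ L)
    (hne : PrTest ρ n Ms E K ≠ 0) :
    condPrTest ρ n Ms E L K ≤ condPrTest ρ n Ms E J K := by
  have hpos : 0 < PrTest ρ n Ms E K :=
    lt_of_le_of_ne (PrSeq_nonneg hρ.1 _) (Ne.symm hne)
  unfold condPrTest
  rw [div_le_div_iff_of_pos_right hpos]
  exact condPrTest_mono' ρ hρ.1 n Ms E hE K L J hL hJ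
end

section
/- Let Σ = (ρ; M_1,…,M_n) be a test on a finite-dimensional complex Hilbert space H, let E_1,…,E_n be events with E_i defined by M_i for each i, let K be a subsequence of (n] with K < i ≤ n, and let J be a subsequence of K, with Pr_Σ[𝔼_K] ≠ 0 and Pr_Σ[𝔼_{K∖J}] ≠ 0. If Ind_Σ(E_i | 𝔼_J; 𝔼_{K∖J}) holds, then Ind_Σ(Ē_i | 𝔼_J; 𝔼_{K∖J}) holds, where Ē_i is the complement of E_i. -/
open Matrix Finset
open scoped ComplexOrder

section AuxForIndTestCompl
variable {d : ℕ}

lemma trace_superop_set (M : Measurement d) (A : Finset ℕ) (hA : A ⊆ M.spec)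
    (σ : Matrix (Fin d) (Fin d) ℂ) :
    (QEvent.superop ⟨M, A, hA⟩ σ).trace = ∑ m ∈ A, ((M.op m)ᴴ * M.op m * σ).trace := by
  rw [QEvent.superop, Matrix.trace_sum]
  exact Finset.sum_congr rfl fun m _ => by rw [Matrix.trace_mul_cycle]

lemma trace_superop_spec (M : Measurement d) (σ : Matrix (Fin d) (Fin d) ℂ) :
    ∑ m ∈ M.spec, ((M.op m)ᴴ * M.op m * σ).trace = σ.trace := by
  rw [← Matrix.trace_sum, ← Finset.sum_mul, M.complete, one_mul]

lemma trace_complete (M : Measurement d) (σ : Matrix (Fin d) (Fin d) ℂ) :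
    ((completeEvent M).superop σ).trace = σ.trace := by
  rw [completeEvent, trace_superop_set, trace_superop_spec]

lemma trace_add_compl (F : QEvent d) (σ : Matrix (Fin d) (Fin d) ℂ) :
    (F.superop σ).trace + (F.compl.superop σ).trace = σ.trace := by
  obtain ⟨M, A, hA⟩ := F
  rw [QEvent.compl, trace_superop_set, trace_superop_set M (M.spec \ A) Finset.sdiff_subset,
    ← Finset.sum_union (Finset.disjoint_sdiff), Finset.union_sdiff_of_subset hA,
    trace_superop_spec]

lemma trace_fold_complete (L : List (QEvent d)) (hL : ∀ F ∈ L, ∃ M, F = completeEvent M)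
    (σ : Matrix (Fin d) (Fin d) ℂ) :
    (L.foldl (fun σ E => E.superop σ) σ).trace = σ.trace := by
  induction L generalizing σ with
  | nil => rfl
  | cons F L ih =>
    obtain ⟨M, rfl⟩ := hL F List.mem_cons_self
    rw [List.foldl_cons, ih (fun F hF => hL F (List.mem_cons_of_mem _ hF)), trace_complete]

lemma filter_range'_le (n m : ℕ) (hm : m ≤ n) (p : ℕ → Bool)
    (hp : ∀ j, 1 ≤ j → j ≤ n → (p j = true ↔ j ≤ m)) :
    (List.range' 1 n).filter p = List.range' 1 m := by
  have hsplit : List.range' 1 n = List.range' 1 m ++ List.range' (1 + m) (n - m) := by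
    have : List.range' 1 m ++ List.range' (1 + 1 * m) (n - m) 1 = List.range' 1 (m + (n - m)) 1 :=
      List.range'_append
    rw [show m + (n - m) = n by omega, show 1 + 1 * m = 1 + m by omega] at this
    exact this.symm
  rw [hsplit, List.filter_append]
  have h1 : (List.range' 1 m).filter p = List.range' 1 m := by
    apply List.filter_eq_self.2
    intro a ha
    rw [List.mem_range'] at ha
    obtain ⟨i, hi, rfl⟩ := ha
    exact (hp _ (by omega) (by omega)).2 (by omega)
  have h2 : (List.range' (1 + m) (n - m)).filter p = [] := by
    apply List.filter_eq_nil_iff.2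
    intro a ha
    rw [List.mem_range'] at ha
    obtain ⟨i, hi, rfl⟩ := ha
    rw [hp _ (by omega) (by omega)]
    omega
  rw [h1, h2, List.append_nil]

lemma testList_eq (n : ℕ) (Ms : ℕ → Measurement d) (F : ℕ → QEvent d) (S : Finset ℕ)
    (m : ℕ) (hm : m ≤ n)
    (hQ : ∀ j, 1 ≤ j → j ≤ n → ((∃ k ∈ S, j ≤ k) ↔ j ≤ m)) :
    testList n Ms F S
      = (List.range' 1 m).map (fun j => if j ∈ S then F j else completeEvent (Ms j)) := by
  unfold testList
  rw [filter_range'_le n m hm _ (fun j h1 h2 => by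
    simpa using hQ j h1 h2)]

lemma range'_succ_right (i : ℕ) (hi : 1 ≤ i) :
    List.range' 1 i = List.range' 1 (i - 1) ++ [i] := by
  have : List.range' 1 (i - 1) ++ List.range' (1 + 1 * (i - 1)) 1 1 = List.range' 1 (i - 1 + 1) 1 :=
    List.range'_append
  rw [show 1 + 1 * (i - 1) = i by omega, show i - 1 + 1 = i by omega,
    List.range'_one] at this
  exact this.symm

lemma key_split {d : ℕ} (ρ : Matrix (Fin d) (Fin d) ℂ)
    (n : ℕ) (Ms : ℕ → Measurement d) (E : ℕ → QEvent d)
    (S : Finset ℕ) (hS : S ⊆ Finset.Icc 1 n)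
    (i : ℕ) (hi : i ∈ Finset.Icc 1 n) (hSi : ∀ k ∈ S, k < i) :
    PrTest ρ n Ms (Function.update E i (E i).compl) (S ∪ {i})
      = PrTest ρ n Ms E S - PrTest ρ n Ms E (S ∪ {i}) ∧
    PrTest ρ n Ms (Function.update E i (E i).compl) S = PrTest ρ n Ms E S := by
  simp only [Finset.mem_Icc] at hi
  set E' := Function.update E i (E i).compl with hE'
  have hEj : ∀ j, j ≠ i → E' j = E j := fun j hj => Function.update_of_ne hj _ _
  have hEi : E' i = (E i).compl := Function.update_self _ _ _
  set g : ℕ → QEvent d := fun j => if j ∈ S then E j else completeEvent (Ms j) with hg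
  set m : ℕ := S.sup id with hmdef
  have hmS : ∀ k ∈ S, k ≤ m := fun k hk => Finset.le_sup (f := id) hk
  have hmn : m ≤ n := Finset.sup_le fun k hk => (Finset.mem_Icc.1 (hS hk)).2
  have hmi : m ≤ i - 1 := Finset.sup_le fun k hk => by have := hSi k hk; simp only [id_eq]; omega
  have hiS : i ∉ S := fun h => lt_irrefl i (hSi i h)
  have hQS : ∀ j, 1 ≤ j → j ≤ n → ((∃ k ∈ S, j ≤ k) ↔ j ≤ m) := by
    intro j h1 h2
    constructor
    · rintro ⟨k, hk, hjk⟩; exact hjk.trans (hmS k hk)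
    · intro hjm
      rcases S.eq_empty_or_nonempty with rfl | hne
      · simp [hmdef] at hjm; omega
      · obtain ⟨k, hk, hsup⟩ := Finset.exists_mem_eq_sup S hne id
        exact ⟨k, hk, by rw [hmdef, hsup] at hjm; exact hjm⟩
  have hQSi : ∀ j, 1 ≤ j → j ≤ n → ((∃ k ∈ S ∪ {i}, j ≤ k) ↔ j ≤ i) := by
    intro j h1 h2
    constructor
    · rintro ⟨k, hk, hjk⟩
      rcases Finset.mem_union.1 hk with hk | hk
      · exact hjk.trans (hSi k hk).le
      · rw [Finset.mem_singleton.1 hk] at hjk; exact hjk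
    · intro hji; exact ⟨i, Finset.mem_union_right _ (Finset.mem_singleton_self i), hji⟩
  -- the lists
  have hLS : testList n Ms E S = (List.range' 1 m).map g :=
    testList_eq n Ms E S m hmn hQS
  have hLS' : testList n Ms E' S = (List.range' 1 m).map g := by
    rw [testList_eq n Ms E' S m hmn hQS]
    apply List.map_congr_left
    intro a ha
    by_cases hmem : a ∈ S
    · simp only [if_pos hmem]
      rw [hEj a (by have := hSi a hmem; omega)]
      simp [hg, hmem]
    · simp only [if_neg hmem]
      simp [hg, hmem]
  have hmemiff : ∀ a ∈ List.range' 1 (i - 1), (a ∈ S ∪ {i} ↔ a ∈ S) := by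
    intro a ha
    rw [List.mem_range'_1] at ha
    simp only [Finset.mem_union, Finset.mem_singleton]
    constructor
    · rintro (h | rfl)
      · exact h
      · omega
    · exact Or.inl
  have hmapUi : ∀ (F : ℕ → QEvent d), (∀ j, j ≠ i → F j = E j) →
      testList n Ms F (S ∪ {i})
        = (List.range' 1 (i - 1)).map g ++ [F i] := by
    intro F hF
    rw [testList_eq n Ms F (S ∪ {i}) i hi.2 hQSi, range'_succ_right i hi.1,
      List.map_append]
    congr 1
    · apply List.map_congr_left
      intro a ha
      have hiff := hmemiff a ha
      by_cases hmem : a ∈ S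
      · rw [if_pos (hiff.2 hmem), hg]
        simp only [if_pos hmem]
        exact hF a (by have := hSi a hmem; omega)
      · rw [if_neg (fun h => hmem (hiff.1 h)), hg]
        simp only [if_neg hmem]
    · simp [Finset.mem_union]
  have hLSi : testList n Ms E (S ∪ {i}) = (List.range' 1 (i - 1)).map g ++ [E i] :=
    hmapUi E (fun _ _ => rfl)
  have hLSi' : testList n Ms E' (S ∪ {i})
      = (List.range' 1 (i - 1)).map g ++ [(E i).compl] := by
    rw [hmapUi E' hEj, hEi]
  -- traces
  set σ : Matrix (Fin d) (Fin d) ℂ :=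
    (List.map g (List.range' 1 (i - 1))).foldl (fun σ E => E.superop σ) ρ with hσ
  have htr : σ.trace = ((List.range' 1 m).map g |>.foldl (fun σ E => E.superop σ) ρ).trace := by
    have hsplit : List.range' 1 (i - 1)
        = List.range' 1 m ++ List.range' (1 + m) (i - 1 - m) := by
      have : List.range' 1 m ++ List.range' (1 + 1 * m) (i - 1 - m) 1
          = List.range' 1 (m + (i - 1 - m)) 1 := List.range'_append
      rw [show m + (i - 1 - m) = i - 1 by omega, show 1 + 1 * m = 1 + m by omega] at this
      exact this.symm
    rw [hσ, hsplit, List.map_append, List.foldl_append]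
    apply trace_fold_complete
    intro F hF
    rw [List.mem_map] at hF
    obtain ⟨a, ha, rfl⟩ := hF
    rw [List.mem_range'_1] at ha
    have hanS : a ∉ S := fun h => by have := hmS a h; omega
    exact ⟨Ms a, by simp [hg, hanS]⟩
  have hfoldlast : ∀ (F : QEvent d),
      ((List.range' 1 (i - 1)).map g ++ [F]).foldl (fun σ E => E.superop σ) ρ
        = F.superop σ := by
    intro F; rw [List.foldl_append]; rfl
  have hsum := trace_add_compl (E i) σ
  constructor
  · simp only [PrTest]
    rw [hLS, hLSi, hLSi']
    simp only [PrSeq]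
    rw [hfoldlast, hfoldlast, ← htr]
    have : ((E i).compl.superop σ).trace = σ.trace - ((E i).superop σ).trace := by
      rw [← hsum]; ring
    rw [this, Complex.sub_re]
  · simp only [PrTest]
    rw [hLS, hLS']

end AuxForIndTestCompl

/-- Proposition 4.2: if `Ind_Σ(E_i | 𝔼_J; 𝔼_{K∖J})`, then
`Ind_Σ(Ē_i | 𝔼_J; 𝔼_{K∖J})`. -/
theorem indTest_compl {d : ℕ} (ρ : Matrix (Fin d) (Fin d) ℂ) (hρ : IsDensityOp ρ)
    (n : ℕ) (Ms : ℕ → Measurement d) (E : ℕ → QEvent d)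
    (hE : ∀ k ∈ Finset.Icc 1 n, (E k).meas = Ms k)
    (K : Finset ℕ) (hK : K ⊆ Finset.Icc 1 n)
    (i : ℕ) (hi : i ∈ Finset.Icc 1 n) (hKi : ∀ k ∈ K, k < i)
    (J : Finset ℕ) (hJ : J ⊆ K)
    (hne : PrTest ρ n Ms E K ≠ 0) (hne' : PrTest ρ n Ms E (K \ J) ≠ 0)
    (hind : IndTest ρ n Ms E i J K) :
    IndTest ρ n Ms (Function.update E i (E i).compl) i J K := by
  unfold IndTest condPrTest at hind ⊢
  have hiK : ∀ k ∈ K, k < i := hKi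
  have hKJ : K \ J ⊆ Finset.Icc 1 n := (Finset.sdiff_subset).trans hK
  have hKJi : ∀ k ∈ K \ J, k < i := fun k hk => hKi k (Finset.sdiff_subset hk)
  obtain ⟨hK1, hK2⟩ := key_split ρ n Ms E K hK i hi hKi
  obtain ⟨hJ1, hJ2⟩ := key_split ρ n Ms E (K \ J) hKJ i hi hKJi
  rw [hK1, hK2, hJ1, hJ2, sub_div, sub_div, div_self hne, div_self hne']
  rw [hind]
end

section
/- Let Σ = (ρ; M_1,…,M_n) be a test on a finite-dimensional complex Hilbert space H, let E_1,…,E_n be events with E_i defined by M_i for each i, let K be a subsequence of (n] with K < i ≤ n, and let J be a subsequence of K, with Pr_Σ[𝔼_K] ≠ 0 and Pr_Σ[𝔼_{K∖J}] ≠ 0. Suppose E_i^{(1)} = {M_i ∈ A_1} and E_i^{(2)} = {M_i ∈ A_2} with A_1 ∩ A_2 = ∅, and both Ind_Σ(E_i^{(1)} | 𝔼_J; 𝔼_{K∖J}) and Ind_Σ(E_i^{(2)} | 𝔼_J; 𝔼_{K∖J}) hold. Then Ind_Σ(E_i^{(1)} ∪ E_i^{(2)} | 𝔼_J; 𝔼_{K∖J})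 holds, where E_i^{(1)} ∪ E_i^{(2)} = {M_i ∈ A_1 ∪ A_2}. -/
open Matrix Finset
open scoped ComplexOrder

lemma testList_update_eq {d : ℕ} (n : ℕ) (Ms : ℕ → Measurement d) (E : ℕ → QEvent d)
    (K : Finset ℕ) (i : ℕ) (hKi : ∀ k ∈ K, k < i) (F : QEvent d) :
    testList n Ms (Function.update E i F) K = testList n Ms E K := by
  unfold testList
  apply List.map_congr_left
  intro x hx
  rw [List.mem_filter] at hx
  obtain ⟨-, hx⟩ := hx
  simp only [decide_eq_true_eq] at hx
  obtain ⟨k, hk, hxk⟩ := hx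
  have hxi : x ≠ i := by have := hKi k hk; omega
  by_cases h : x ∈ K <;> simp [h, Function.update_of_ne hxi]

lemma testList_insert_eq {d : ℕ} (n : ℕ) (Ms : ℕ → Measurement d) (E : ℕ → QEvent d)
    (K : Finset ℕ) (i : ℕ) (hKi : ∀ k ∈ K, k < i) (hi1 : 1 ≤ i) (hin : i ≤ n) (F : QEvent d) :
    testList n Ms (Function.update E i F) (K ∪ {i}) =
      ((List.range' 1 (i-1)).map (fun x => if x ∈ K then E x else completeEvent (Ms x))) ++ [F] := by
  unfold testList
  have h1 : (List.range' 1 n).filter (fun x => decide (∃ k ∈ K ∪ {i}, x ≤ k))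
      = List.range' 1 (i-1) ++ [i] := by
    have hsplit : List.range' 1 n = List.range' 1 i ++ List.range' (1+i) (n-i) := by
      rw [List.range'_append_1]; congr 1; omega
    rw [hsplit, List.filter_append]
    have h2 : (List.range' 1 i).filter (fun x => decide (∃ k ∈ K ∪ {i}, x ≤ k))
        = List.range' 1 i := by
      rw [List.filter_eq_self]
      intro x hx
      rw [List.mem_range'_1] at hx
      simp only [decide_eq_true_eq]
      exact ⟨i, by simp, by omega⟩
    have h3 : (List.range' (1+i) (n-i)).filter (fun x => decide (∃ k ∈ K ∪ {i}, x ≤ k))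
        = [] := by
      rw [List.filter_eq_nil_iff]
      intro x hx
      rw [List.mem_range'_1] at hx
      simp only [decide_eq_true_eq, not_exists, not_and, Finset.mem_union, Finset.mem_singleton]
      rintro k (hk | rfl)
      · have := hKi k hk; omega
      · omega
    rw [h2, h3, List.append_nil]
    have h4 : List.range' 1 i = List.range' 1 (i-1) ++ List.range' (1+(i-1)) 1 := by
      rw [List.range'_append_1]; congr 1; omega
    have h5 : 1 + (i-1) = i := by omega
    rw [h4, h5, List.range'_one]
  rw [h1, List.map_append]
  congr 1
  · apply List.map_congr_left
    intro x hx
    rw [List.mem_range'_1] at hx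
    have hxi : x ≠ i := by omega
    have hxK : (x ∈ K ∪ {i}) = (x ∈ K) := by
      simp [Finset.mem_union, Finset.mem_singleton, hxi]
    by_cases h : x ∈ K <;> simp [h, hxi, Function.update_of_ne hxi]
  · simp [Function.update_self]

lemma PrSeq_concat_union {d : ℕ} (ρ : Matrix (Fin d) (Fin d) ℂ) (L : List (QEvent d))
    (M : Measurement d) (A₁ A₂ : Finset ℕ) (h₁ : A₁ ⊆ M.spec) (h₂ : A₂ ⊆ M.spec)
    (hdisj : A₁ ∩ A₂ = ∅) :
    PrSeq ρ (L ++ [⟨M, A₁ ∪ A₂, Finset.union_subset h₁ h₂⟩]) =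
      PrSeq ρ (L ++ [⟨M, A₁, h₁⟩]) + PrSeq ρ (L ++ [⟨M, A₂, h₂⟩]) := by
  unfold PrSeq
  rw [List.foldl_append, List.foldl_append, List.foldl_append]
  simp only [List.foldl_cons, List.foldl_nil]
  unfold QEvent.superop
  rw [Finset.sum_union (Finset.disjoint_iff_inter_eq_empty.mpr hdisj),
    Matrix.trace_add, Complex.add_re]


/-- Proposition 4.4: if `E_i⁽¹⁾ = {M_i ∈ A₁}` and `E_i⁽²⁾ = {M_i ∈ A₂}`
with `A₁ ∩ A₂ = ∅`, and both `Ind_Σ(E_i⁽¹⁾ | 𝔼_J; 𝔼_{K∖J})` and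
`Ind_Σ(E_i⁽²⁾ | 𝔼_J; 𝔼_{K∖J})` hold, then `Ind_Σ(E_i⁽¹⁾ ∪ E_i⁽²⁾ | 𝔼_J; 𝔼_{K∖J})`. -/
theorem indTest_union {d : ℕ} (ρ : Matrix (Fin d) (Fin d) ℂ) (hρ : IsDensityOp ρ)
    (n : ℕ) (Ms : ℕ → Measurement d) (E : ℕ → QEvent d)
    (hE : ∀ k ∈ Finset.Icc 1 n, (E k).meas = Ms k)
    (K : Finset ℕ) (hK : K ⊆ Finset.Icc 1 n)
    (i : ℕ) (hi : i ∈ Finset.Icc 1 n) (hKi : ∀ k ∈ K, k < i)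
    (J : Finset ℕ) (hJ : J ⊆ K)
    (hne : PrTest ρ n Ms E K ≠ 0) (hne' : PrTest ρ n Ms E (K \ J) ≠ 0)
    (A₁ A₂ : Finset ℕ) (h₁ : A₁ ⊆ (Ms i).spec) (h₂ : A₂ ⊆ (Ms i).spec)
    (hdisj : A₁ ∩ A₂ = ∅)
    (hind₁ : IndTest ρ n Ms (Function.update E i ⟨Ms i, A₁, h₁⟩) i J K)
    (hind₂ : IndTest ρ n Ms (Function.update E i ⟨Ms i, A₂, h₂⟩) i J K) :
    IndTest ρ n Ms
      (Function.update E i ⟨Ms i, A₁ ∪ A₂, Finset.union_subset h₁ h₂⟩) i J K := by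
  have hi' := Finset.mem_Icc.mp hi
  have hKi' : ∀ k ∈ K \ J, k < i := fun k hk => hKi k (Finset.sdiff_subset hk)
  unfold IndTest condPrTest PrTest at hind₁ hind₂ ⊢
  rw [testList_update_eq n Ms E K i hKi,
      testList_update_eq n Ms E (K \ J) i hKi',
      testList_insert_eq n Ms E K i hKi hi'.1 hi'.2,
      testList_insert_eq n Ms E (K \ J) i hKi' hi'.1 hi'.2] at hind₁ hind₂ ⊢
  rw [PrSeq_concat_union ρ _ (Ms i) A₁ A₂ h₁ h₂ hdisj,
      PrSeq_concat_union ρ _ (Ms i) A₁ A₂ h₁ h₂ hdisj,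
      add_div, add_div, hind₁, hind₂]
end
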